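/- arXiv:2406.16343 — 3 statements merged into one kernel-verified Lean document; each statement's English description precedes it below -/
import Mathlib

section
/- The 4·log(p_min^{−1}) analysis of threshold policies is tight up to a constant factor: for every integer k ≥ 2 and every δ > 0, there exists a delegation instance with 2k−1 actions (no outside option) whose value profile is uniformly distributed over 2^k − 1 correlated realizations (so p_min = 1/(2^k − 1)), in which f(A*) ≥ (k/(2+δ)) · f(A_t) for every threshold t ∈ ℝ; hence no threshold policy is better than an Ω(log p_min^{−1})-approximation on this family. -/
open Finset

/-!
Delegated choice with **no outside option**.  There are `n` actions, indexed by
`Fin n`.  Action `i` has a known bias `b i`; the value profile `v : Fin n → ℝ`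
is drawn from a finitely supported distribution with support `S` and probability
mass `p`.  From a nonempty menu `A` the agent picks an action maximizing
`v i + b i`, breaking ties in favor of larger value `v i`.
-/

/-- `g` is a valid agent choice function for biases `b` (no outside option):
from every nonempty menu `A` it picks an agent-utility-maximizing action,
breaking ties in favor of larger value. -/
def IsChoiceN (n : ℕ) (b : Fin n → ℝ)
    (g : Finset (Fin n) → (Fin n → ℝ) → Fin n) : Prop :=
  ∀ (A : Finset (Fin n)) (v : Fin n → ℝ), A.Nonempty →
    g A v ∈ A ∧
    (∀ j ∈ A, v j + b j ≤ v (g A v) + b (g A v)) ∧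
    (∀ j ∈ A, v j + b j = v (g A v) + b (g A v) → v j ≤ v (g A v))

/-- The principal's expected utility `f(A)` from menu `A`. -/
def utilN {n : ℕ} (S : Finset (Fin n → ℝ)) (p : (Fin n → ℝ) → ℝ)
    (g : Finset (Fin n) → (Fin n → ℝ) → Fin n) (A : Finset (Fin n)) : ℝ :=
  ∑ v ∈ S, p v * v (g A v)

/-- The threshold menu `A_t = {i : b i ≤ t}`. -/
noncomputable def threshN (n : ℕ) (b : Fin n → ℝ) (t : ℝ) : Finset (Fin n) :=
  Finset.univ.filter fun i => b i ≤ t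

/-- `S, p` is a finitely supported probability distribution over nonnegative value
profiles. -/
def ValidDistN {n : ℕ} (S : Finset (Fin n → ℝ)) (p : (Fin n → ℝ) → ℝ) : Prop :=
  (∀ v ∈ S, 0 ≤ p v) ∧ (∑ v ∈ S, p v = 1) ∧ ∀ v ∈ S, ∀ i, 0 ≤ v i

/-- The coordinates `v 1, …, v n` are mutually independent: the joint mass of
every profile is the product of the marginal masses of its coordinates. -/
def IndepValuesN {n : ℕ} (S : Finset (Fin n → ℝ)) (p : (Fin n → ℝ) → ℝ) : Prop :=
  ∀ w : Fin n → ℝ,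
    (∑ v ∈ S.filter fun v => v = w, p v)
      = ∏ i : Fin n, ∑ v ∈ S.filter fun v => v i = w i, p v

namespace LogTightAux

noncomputable def Mc (δ : ℝ) : ℝ := 4 + 2 / δ
noncomputable def eps (k : ℕ) : ℝ := ((2:ℝ) ^ k)⁻¹
noncomputable def eta (k j : ℕ) : ℝ := 1 - ((j:ℝ) + 1) / (2 * k)

noncomputable def bbias (k : ℕ) (δ : ℝ) : Fin (2 * k - 1) → ℝ := fun a =>
  if a.val < k then -(2 ^ (a.val + 1) * Mc δ)
  else -(2 ^ (a.val - k + 1) * Mc δ + 1)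

noncomputable def prof (k : ℕ) (δ : ℝ) (i r : ℕ) : Fin (2 * k - 1) → ℝ := fun a =>
  if a.val < k then (if a.val = i then 2 ^ (i + 1) * Mc δ + r * eps k else 0)
  else (if a.val - k < i then 2 ^ (a.val - k + 1) * Mc δ + 1 + eta k (a.val - k) else 0)

def sig (k : ℕ) : Finset ((_ : ℕ) × ℕ) :=
  (Finset.range k).sigma fun i => Finset.range (2 ^ (k - 1 - i))

noncomputable def SS (k : ℕ) (δ : ℝ) : Finset (Fin (2 * k - 1) → ℝ) :=
  (sig k).image fun s => prof k δ s.1 s.2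

lemma hM (δ : ℝ) (hδ : 0 < δ) : 4 ≤ Mc δ := by
  have : 0 < 2 / δ := by positivity
  unfold Mc; linarith

lemma Mpos {δ : ℝ} (hδ : 0 < δ) : 0 < Mc δ := lt_of_lt_of_le (by norm_num) (hM δ hδ)

lemma hpow2 {n m : ℕ} (h : n ≤ m) : (2:ℝ) ^ n ≤ (2:ℝ) ^ m :=
  pow_le_pow_right₀ one_le_two h

lemma one_le_p2 (i : ℕ) : (1:ℝ) ≤ 2 ^ i := by
  calc (1:ℝ) = 2 ^ 0 := by norm_num
  _ ≤ 2 ^ i := hpow2 (Nat.zero_le i)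

lemma eps_pos (k : ℕ) : 0 < eps k := by unfold eps; positivity

lemma reps_lt {k i r : ℕ} (hk : 1 ≤ k) (hr : r < 2 ^ (k - 1 - i)) :
    (r:ℝ) * eps k < 1/2 := by
  have h1 : (r:ℝ) < (2:ℝ) ^ (k-1) := by
    have : r < 2 ^ (k-1) := lt_of_lt_of_le hr (Nat.pow_le_pow_right (by norm_num) (by omega))
    calc (r:ℝ) < ((2 ^ (k-1) : ℕ) : ℝ) := by exact_mod_cast this
    _ = (2:ℝ) ^ (k-1) := by push_cast; ring
  have h2 : (2:ℝ) ^ k = 2 * (2:ℝ) ^ (k-1) := by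
    rw [← pow_succ']
    congr 1; omega
  have h3 : (0:ℝ) < (2:ℝ) ^ (k-1) := by positivity
  unfold eps
  rw [h2]
  have : (r:ℝ) * (2 * (2:ℝ)^(k-1))⁻¹ < (2:ℝ)^(k-1) * (2 * (2:ℝ)^(k-1))⁻¹ :=
    mul_lt_mul_of_pos_right h1 (by positivity)
  have he : (2:ℝ)^(k-1) * (2 * (2:ℝ)^(k-1))⁻¹ = 1/2 := by
    field_simp
  linarith

lemma reps_nonneg (k r : ℕ) : (0:ℝ) ≤ (r:ℝ) * eps k :=
  mul_nonneg (Nat.cast_nonneg r) (le_of_lt (eps_pos k))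

lemma eta_le_one (k j : ℕ) : eta k j ≤ 1 := by
  unfold eta
  have : (0:ℝ) ≤ ((j:ℝ)+1) / (2*k) := by positivity
  linarith

lemma eta_nonneg {k j : ℕ} (hk : 1 ≤ k) (hj : j + 1 ≤ 2 * k) : 0 ≤ eta k j := by
  unfold eta
  have h0 : (0:ℝ) < 2 * (k:ℝ) := by positivity
  have : ((j:ℝ)+1) / (2*k) ≤ 1 := by
    rw [div_le_one h0]; exact_mod_cast hj
  linarith

lemma eta_gt_half {k j : ℕ} (hj : j + 1 < k) : 1/2 < eta k j := by
  have hk : 0 < k := by omega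
  have h0 : (0:ℝ) < 2 * (k:ℝ) := by positivity
  unfold eta
  have : ((j:ℝ)+1) / (2*k) < 1/2 := by
    rw [div_lt_iff₀ h0]
    have : ((j:ℝ) + 1) < (k:ℝ) := by exact_mod_cast hj
    linarith
  linarith

lemma eta_lt {k j j' : ℕ} (hk : 1 ≤ k) (h : j < j') : eta k j' < eta k j := by
  unfold eta
  have h0 : (0:ℝ) < 2 * (k:ℝ) := by positivity
  have hjj : ((j:ℝ)+1) < ((j':ℝ)+1) := by
    have : (j:ℝ) < (j':ℝ) := by exact_mod_cast h
    linarith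
  have : ((j:ℝ)+1) / (2*k) < ((j':ℝ)+1) / (2*k) := div_lt_div_of_pos_right hjj h0
  linarith

lemma geomNat (K : ℕ) : ∑ j ∈ Finset.range K, 2 ^ j = 2 ^ K - 1 := by
  induction K with
  | zero => simp
  | succ K ih =>
    rw [Finset.sum_range_succ, ih]
    have h1 : 1 ≤ 2 ^ K := Nat.one_le_two_pow
    have h2 : 2 ^ (K + 1) = 2 * 2 ^ K := by ring
    omega

lemma sum_pows (k : ℕ) : ∑ i ∈ Finset.range k, 2 ^ (k - 1 - i) = 2 ^ k - 1 := by
  rw [Finset.sum_range_reflect (fun j => 2 ^ j) k, geomNat]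

lemma sig_card (k : ℕ) : (sig k).card = 2 ^ k - 1 := by
  rw [sig, Finset.card_sigma]
  simp only [Finset.card_range]
  exact sum_pows k

lemma mem_sig {k : ℕ} {s : (_ : ℕ) × ℕ} (hs : s ∈ sig k) :
    s.1 < k ∧ s.2 < 2 ^ (k - 1 - s.1) := by
  rw [sig, Finset.mem_sigma] at hs
  simpa using hs

lemma tn_le (k m : ℕ) :
    (∑ i ∈ Finset.range k, if m ≤ i then 2 ^ (k - 1 - i) else 0) ≤ 2 ^ (k - m) := by
  have hrefl := Finset.sum_range_reflect (fun i => if m ≤ i then 2 ^ (k - 1 - i) else 0) k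
  rw [← hrefl]
  have hc : ∀ j ∈ Finset.range k,
      (if m ≤ k - 1 - j then 2 ^ (k - 1 - (k - 1 - j)) else 0) =
        (if j < k - m then 2 ^ j else 0) := by
    intro j hj
    rw [Finset.mem_range] at hj
    by_cases h : m ≤ k - 1 - j
    · rw [if_pos h, if_pos (by omega), (by omega : k - 1 - (k - 1 - j) = j)]
    · rw [if_neg h, if_neg (by omega)]
  rw [Finset.sum_congr rfl hc]
  have hsub := Finset.sum_subset (Finset.range_subset_range.mpr (by omega : k - m ≤ k))
    (fun x _ hx => by
      show (if x < k - m then 2 ^ x else 0) = 0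
      rw [if_neg (by simpa [Finset.mem_range] using hx)])
    (f := fun j => if j < k - m then 2 ^ j else 0)
  have hfin : (∑ x ∈ Finset.range k, if x < k - m then 2 ^ x else 0) = 2 ^ (k - m) - 1 := by
    rw [← hsub, Finset.sum_congr rfl (fun x hx => if_pos (Finset.mem_range.mp hx)), geomNat]
  rw [hfin]
  exact Nat.sub_le _ _

lemma prof_nonneg {k : ℕ} {δ : ℝ} (hk : 2 ≤ k) (hδ : 0 < δ) (i r : ℕ)
    (a : Fin (2 * k - 1)) : 0 ≤ prof k δ i r a := by
  have hMp := Mpos hδ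
  have hre := reps_nonneg k r
  have hp1 : (0:ℝ) < 2 ^ (i+1) * Mc δ := mul_pos (by positivity) hMp
  have hp2 : (0:ℝ) < 2 ^ (a.val - k + 1) * Mc δ := mul_pos (by positivity) hMp
  have hetan : 0 ≤ eta k (a.val - k) := eta_nonneg (by omega) (by omega)
  unfold prof
  split_ifs <;> linarith

lemma val_le {k : ℕ} {δ : ℝ} (hk : 2 ≤ k) (hδ : 0 < δ) {i : ℕ} (r : ℕ)
    (hik : i < k) (a : Fin (2 * k - 1)) :
    prof k δ i r a ≤ 2 ^ (i + 1) * Mc δ + r * eps k := by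
  have hMp := Mpos hδ
  have hM4 := hM δ hδ
  have hre := reps_nonneg k r
  have hp1 : (0:ℝ) < 2 ^ (i+1) * Mc δ := mul_pos (by positivity) hMp
  unfold prof
  split_ifs with h1 h2 h3
  · exact le_refl _
  · linarith
  · have hj1 : (2:ℝ) ^ (a.val - k + 1) ≤ 2 ^ i := hpow2 (by omega)
    have hmm : (2:ℝ) ^ (a.val - k + 1) * Mc δ ≤ 2 ^ i * Mc δ :=
      mul_le_mul_of_nonneg_right hj1 (le_of_lt hMp)
    have h2i : (1:ℝ) ≤ 2 ^ i := one_le_p2 i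
    have hps : (2:ℝ) ^ (i+1) = 2 * 2 ^ i := by ring
    have heta := eta_le_one k (a.val - k)
    nlinarith
  · linarith

lemma prof_injOn {k : ℕ} {δ : ℝ} (hk : 2 ≤ k) (hδ : 0 < δ) :
    ∀ x ∈ sig k, ∀ y ∈ sig k, prof k δ x.1 x.2 = prof k δ y.1 y.2 → x = y := by
  rintro ⟨i, r⟩ hx ⟨i', r'⟩ hy h
  obtain ⟨hik, hr⟩ := mem_sig hx
  obtain ⟨hik', hr'⟩ := mem_sig hy
  dsimp only at hik hr hik' hr' h
  have hMp := Mpos hδ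
  have hre := reps_nonneg k r
  have hp1 : (0:ℝ) < 2 ^ (i+1) * Mc δ := mul_pos (by positivity) hMp
  have ha : i < 2 * k - 1 := by omega
  have hcf := congrFun h ⟨i, ha⟩
  by_cases hii : i = i'
  · subst hii
    simp only [prof, if_pos hik, if_pos rfl] at hcf
    have : (r:ℝ) = (r':ℝ) := by
      have hne : eps k ≠ 0 := ne_of_gt (eps_pos k)
      have h2 : (r:ℝ) * eps k = (r':ℝ) * eps k := by simp only [if_true] at hcf; linarith
      exact mul_right_cancel₀ hne h2
    have : r = r' := by exact_mod_cast this
    subst this; rfl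
  · simp only [prof, if_pos hik, if_pos rfl, if_neg hii, if_true] at hcf
    linarith

lemma prof_main_self {k : ℕ} {δ : ℝ} {i : ℕ} (r : ℕ) {a : Fin (2*k-1)}
    (hwk : a.val < k) (hwi : a.val = i) :
    prof k δ i r a = 2 ^ (i+1) * Mc δ + r * eps k := by
  unfold prof; rw [if_pos hwk, if_pos hwi]

lemma prof_main_ne {k : ℕ} {δ : ℝ} {i : ℕ} (r : ℕ) {a : Fin (2*k-1)}
    (hwk : a.val < k) (hwi : a.val ≠ i) : prof k δ i r a = 0 := by
  unfold prof; rw [if_pos hwk, if_neg hwi]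

lemma prof_dest_act {k : ℕ} {δ : ℝ} {i : ℕ} (r : ℕ) {a : Fin (2*k-1)}
    (hwk : ¬ a.val < k) (hact : a.val - k < i) :
    prof k δ i r a = 2 ^ (a.val - k + 1) * Mc δ + 1 + eta k (a.val - k) := by
  unfold prof; rw [if_neg hwk, if_pos hact]

lemma prof_dest_inact {k : ℕ} {δ : ℝ} {i : ℕ} (r : ℕ) {a : Fin (2*k-1)}
    (hwk : ¬ a.val < k) (hact : ¬ a.val - k < i) : prof k δ i r a = 0 := by
  unfold prof; rw [if_neg hwk, if_neg hact]

lemma bbias_lt {k : ℕ} {δ : ℝ} {a : Fin (2*k-1)} (hwk : a.val < k) :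
    bbias k δ a = -(2 ^ (a.val + 1) * Mc δ) := by
  unfold bbias; rw [if_pos hwk]

lemma bbias_ge {k : ℕ} {δ : ℝ} {a : Fin (2*k-1)} (hwk : ¬ a.val < k) :
    bbias k δ a = -(2 ^ (a.val - k + 1) * Mc δ + 1) := by
  unfold bbias; rw [if_neg hwk]

lemma prof_dm {k : ℕ} {δ : ℝ} (i r j : ℕ) (h : k + j < 2*k-1) (hact : j < i) :
    prof k δ i r ⟨k + j, h⟩ = 2 ^ (j+1) * Mc δ + 1 + eta k j := by
  have e1 : (⟨k + j, h⟩ : Fin (2*k-1)).val = k + j := rfl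
  have e2 : k + j - k = j := by omega
  rw [prof_dest_act r (a := ⟨k+j,h⟩) (by omega) (by omega), e1, e2]

lemma bbias_dm {k : ℕ} {δ : ℝ} (j : ℕ) (h : k + j < 2*k-1) :
    bbias k δ ⟨k + j, h⟩ = -(2 ^ (j+1) * Mc δ + 1) := by
  have e1 : (⟨k + j, h⟩ : Fin (2*k-1)).val = k + j := rfl
  have e2 : k + j - k = j := by omega
  rw [bbias_ge (a := ⟨k+j,h⟩) (by omega), e1, e2]

end LogTightAux

open LogTightAux

/-- **tightness of the logarithmic approximation.** For every
integer `k ≥ 2` and `δ > 0` there is a delegation instance with `2k−1` actions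
whose value profile is uniform over `2^k − 1` correlated realizations (so
`p_min = 1/(2^k − 1)`) in which `f(A*) ≥ (k/(2+δ)) · f(A_t)` for every (nonempty)
threshold menu; hence no threshold policy beats an `Ω(log p_min⁻¹)`-approximation
on this family. -/
theorem log_approximation_tight (k : ℕ) (hk : 2 ≤ k) (δ : ℝ) (hδ : 0 < δ) :
    ∃ (b : Fin (2 * k - 1) → ℝ) (S : Finset (Fin (2 * k - 1) → ℝ))
      (p : (Fin (2 * k - 1) → ℝ) → ℝ),
      ValidDistN S p ∧ S.card = 2 ^ k - 1 ∧
      (∀ v ∈ S, p v = 1 / ((2 : ℝ) ^ k - 1)) ∧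
      ∀ g : Finset (Fin (2 * k - 1)) → (Fin (2 * k - 1) → ℝ) → Fin (2 * k - 1),
        IsChoiceN (2 * k - 1) b g →
          ∃ Astar : Finset (Fin (2 * k - 1)), Astar.Nonempty ∧
            (∀ A : Finset (Fin (2 * k - 1)), A.Nonempty →
              utilN S p g A ≤ utilN S p g Astar) ∧
            ∀ t : ℝ, (threshN (2 * k - 1) b t).Nonempty →
              ((k : ℝ) / (2 + δ)) * utilN S p g (threshN (2 * k - 1) b t)
                ≤ utilN S p g Astar := by
  classical
  have hM4 := hM δ hδ
  have hMp := Mpos hδ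
  have hpk4 : (4:ℝ) ≤ 2 ^ k := by
    calc (4:ℝ) = 2 ^ 2 := by norm_num
    _ ≤ 2 ^ k := hpow2 hk
  have hpc : 0 < 1 / ((2:ℝ) ^ k - 1) := by
    apply div_pos one_pos; linarith
  have hcard : (SS k δ).card = 2 ^ k - 1 := by
    rw [SS, Finset.card_image_of_injOn, sig_card]
    intro x hx y hy hxy
    exact prof_injOn hk hδ x hx y hy hxy
  refine ⟨bbias k δ, SS k δ, fun _ => 1 / ((2:ℝ) ^ k - 1), ⟨fun v _ => le_of_lt hpc, ?_, ?_⟩,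
    hcard, fun v _ => rfl, ?_⟩
  · -- sums to one
    rw [Finset.sum_const, nsmul_eq_mul, hcard]
    have hc1 : ((2 ^ k - 1 : ℕ) : ℝ) = (2:ℝ) ^ k - 1 := by
      rw [Nat.cast_sub Nat.one_le_two_pow]
      push_cast; ring
    rw [hc1, mul_one_div, div_self (by linarith)]
  · -- values nonnegative
    intro v hv i
    rw [SS, Finset.mem_image] at hv
    obtain ⟨s, hs, rfl⟩ := hv
    exact prof_nonneg hk hδ s.1 s.2 i
  -- main part
  intro g hg
  have util_eq : ∀ A, utilN (SS k δ) (fun _ => 1 / ((2:ℝ) ^ k - 1)) g A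
      = ∑ s ∈ sig k, (1 / ((2:ℝ) ^ k - 1)) * prof k δ s.1 s.2 (g A (prof k δ s.1 s.2)) := by
    intro A
    unfold utilN SS
    rw [Finset.sum_image (prof_injOn hk hδ)]
  set Ast : Finset (Fin (2*k-1)) := Finset.univ.filter (fun a => a.val < k) with hAstdef
  have hAne : Ast.Nonempty := by
    refine ⟨⟨0, by omega⟩, ?_⟩
    rw [hAstdef, Finset.mem_filter]
    exact ⟨Finset.mem_univ _, show (0:ℕ) < k by omega⟩
  have keyA : ∀ i r : ℕ, i < k →
      prof k δ i r (g Ast (prof k δ i r)) = 2 ^ (i+1) * Mc δ + r * eps k := by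
    intro i r hik
    obtain ⟨hmem, hmax, -⟩ := hg Ast (prof k δ i r) hAne
    have hwk : (g Ast (prof k δ i r)).val < k := by
      rw [hAstdef] at hmem
      exact (Finset.mem_filter.mp hmem).2
    have hia : i < 2*k-1 := by omega
    have hmainmem : (⟨i, hia⟩ : Fin (2*k-1)) ∈ Ast := by
      rw [hAstdef, Finset.mem_filter]
      exact ⟨Finset.mem_univ _, hik⟩
    have h1 := hmax _ hmainmem
    by_cases hwi : (g Ast (prof k δ i r)).val = i
    · exact prof_main_self r hwk hwi
    · exfalso
      have hre := reps_nonneg k r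
      have hp1 : (0:ℝ) < 2 ^ ((g Ast (prof k δ i r)).val + 1) * Mc δ :=
        mul_pos (by positivity) hMp
      rw [prof_main_self r (a := ⟨i, hia⟩) hik rfl, bbias_lt (a := ⟨i, hia⟩) hik,
        prof_main_ne r hwk hwi, bbias_lt hwk] at h1
      have e : (⟨i, hia⟩ : Fin (2*k-1)).val = i := rfl
      rw [e] at h1
      linarith
  have utilAst : utilN (SS k δ) (fun _ => 1 / ((2:ℝ)^k-1)) g Ast
      = ∑ s ∈ sig k, (1 / ((2:ℝ)^k-1)) * (2^(s.1+1) * Mc δ + s.2 * eps k) := by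
    rw [util_eq]
    exact Finset.sum_congr rfl (fun s hs => by rw [keyA s.1 s.2 (mem_sig hs).1])
  have hQ : ∀ i ∈ Finset.range k,
      (∑ _r ∈ Finset.range (2^(k-1-i)), (1 / ((2:ℝ)^k-1)) * (2^(i+1) * Mc δ))
        = (1 / ((2:ℝ)^k-1)) * ((2:ℝ)^k * Mc δ) := by
    intro i hi
    rw [Finset.sum_const, Finset.card_range, nsmul_eq_mul]
    have hcast : ((2^(k-1-i) : ℕ):ℝ) = (2:ℝ)^(k-1-i) := by push_cast; ring
    have hexp : (2:ℝ)^(k-1-i) * (2:ℝ)^(i+1) = (2:ℝ)^k := by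
      rw [← pow_add]
      congr 1
      rw [Finset.mem_range] at hi
      omega
    rw [hcast, ← hexp]
    ring
  have hAstar_ge : (k:ℝ) * ((1 / ((2:ℝ)^k-1)) * ((2:ℝ)^k * Mc δ))
      ≤ utilN (SS k δ) (fun _ => 1 / ((2:ℝ)^k-1)) g Ast := by
    rw [utilAst]
    have step1 : ∑ s ∈ sig k, (1 / ((2:ℝ)^k-1)) * (2^(s.1+1) * Mc δ)
        ≤ ∑ s ∈ sig k, (1 / ((2:ℝ)^k-1)) * (2^(s.1+1) * Mc δ + s.2 * eps k) := by
      refine Finset.sum_le_sum (fun s _ => ?_)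
      have := reps_nonneg k s.2
      exact mul_le_mul_of_nonneg_left (by linarith) (le_of_lt hpc)
    have step2 : ∑ s ∈ sig k, (1 / ((2:ℝ)^k-1)) * (2^(s.1+1) * Mc δ)
        = (k:ℝ) * ((1 / ((2:ℝ)^k-1)) * ((2:ℝ)^k * Mc δ)) := by
      rw [sig, Finset.sum_sigma]
      rw [Finset.sum_congr rfl hQ, Finset.sum_const, Finset.card_range, nsmul_eq_mul]
    linarith
  have hopt : ∀ A : Finset (Fin (2*k-1)), A.Nonempty →
      utilN (SS k δ) (fun _ => 1 / ((2:ℝ)^k-1)) g A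
        ≤ utilN (SS k δ) (fun _ => 1 / ((2:ℝ)^k-1)) g Ast := by
    intro A hA
    rw [util_eq A, utilAst]
    refine Finset.sum_le_sum (fun s hs => ?_)
    exact mul_le_mul_of_nonneg_left (val_le hk hδ s.2 (mem_sig hs).1 _) (le_of_lt hpc)
  refine ⟨Ast, hAne, hopt, ?_⟩
  intro t hne
  have hPk1 : -((2:ℝ)^((k-1)+1) * Mc δ) ≤ t := by
    obtain ⟨a, hat⟩ := hne
    have hab : bbias k δ a ≤ t := by
      unfold threshN at hat
      exact (Finset.mem_filter.mp hat).2
    have hexp : k - 1 + 1 = k := by omega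
    rw [hexp]
    by_cases hak : a.val < k
    · have h1 : (2:ℝ)^(a.val+1) ≤ 2^k := hpow2 (by omega)
      have p1 := mul_le_mul_of_nonneg_right h1 (le_of_lt hMp)
      rw [bbias_lt hak] at hab
      linarith
    · have hj : a.val - k + 1 ≤ k - 1 := by have := a.isLt; omega
      have h1 : (2:ℝ)^(a.val-k+1) ≤ 2^(k-1) := hpow2 hj
      have h2 : (2:ℝ)^k = 2 * 2^(k-1) := by
        rw [← pow_succ']; congr 1; omega
      have h3 : (1:ℝ) ≤ 2^(k-1) := one_le_p2 _
      have p1 := mul_le_mul_of_nonneg_right h1 (le_of_lt hMp)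
      have p2 : (1:ℝ)*4 ≤ 2^(k-1)*Mc δ := mul_le_mul h3 hM4 (by norm_num) (by positivity)
      rw [bbias_ge hak] at hab
      rw [h2]
      linarith
  have hex : ∃ i, -((2:ℝ)^(i+1) * Mc δ) ≤ t := ⟨k-1, hPk1⟩
  set m := Nat.find hex with hmdef
  have hPm : -((2:ℝ)^(m+1) * Mc δ) ≤ t := Nat.find_spec hex
  have hmin : ∀ i, i < m → ¬ (-((2:ℝ)^(i+1) * Mc δ) ≤ t) := fun i hi => Nat.find_min hex hi
  have hmk : m ≤ k - 1 := Nat.find_le hPk1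
  have hchar : ∀ a : Fin (2*k-1), a ∈ threshN (2*k-1) (bbias k δ) t →
      (a.val < k → m ≤ a.val) ∧ (¬ a.val < k → m ≤ a.val - k + 1) := by
    intro a ha
    have hab : bbias k δ a ≤ t := by
      unfold threshN at ha
      exact (Finset.mem_filter.mp ha).2
    constructor
    · intro hak
      by_contra hcon
      push_neg at hcon
      exact hmin a.val hcon (by rw [← bbias_lt hak]; exact hab)
    · intro hak
      by_contra hcon
      push_neg at hcon
      have hnp := hmin (a.val - k + 1) hcon
      push_neg at hnp
      rw [bbias_ge hak] at hab
      have h2 : (1:ℝ) ≤ 2^(a.val-k+1) := one_le_p2 _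
      have p2 : (1:ℝ)*4 ≤ 2^(a.val-k+1)*Mc δ := mul_le_mul h2 hM4 (by norm_num) (by positivity)
      have h1p : (2:ℝ)^(a.val-k+1+1)*Mc δ = 2*(2^(a.val-k+1)*Mc δ) := by ring
      linarith
  set At := threshN (2*k-1) (bbias k δ) t with hAtdef
  have hCpos : (0:ℝ) < 2^(m+1) * Mc δ + 2 := by
    have := mul_pos (pow_pos two_pos (m+1)) hMp
    linarith
  have hval : ∀ s ∈ sig k, prof k δ s.1 s.2 (g At (prof k δ s.1 s.2))
      ≤ (if m ≤ s.1 then 2^(m+1) * Mc δ + 2 else 0) := by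
    rintro ⟨i, r⟩ hs
    obtain ⟨hik, hr⟩ := mem_sig hs
    dsimp only at hik hr ⊢
    obtain ⟨hmem, hmax, -⟩ := hg At (prof k δ i r) hne
    have hcw := hchar _ hmem
    by_cases him : m ≤ i
    · rw [if_pos him]
      by_cases hwk : (g At (prof k δ i r)).val < k
      · by_cases hwi : (g At (prof k δ i r)).val = i
        · rw [prof_main_self r hwk hwi]
          rcases eq_or_lt_of_le him with hmi | hmi
          · have hre : (r:ℝ) * eps k < 1/2 := reps_lt (by omega) hr
            rw [← hmi]
            linarith
          · exfalso
            have hkm2 : k + m < 2*k-1 := by omega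
            have hDmem : (⟨k+m, hkm2⟩ : Fin (2*k-1)) ∈ At := by
              rw [hAtdef]
              unfold threshN
              rw [Finset.mem_filter]
              refine ⟨Finset.mem_univ _, ?_⟩
              rw [bbias_dm m hkm2]
              linarith
            have h2 := hmax _ hDmem
            rw [prof_dm i r m hkm2 hmi, bbias_dm m hkm2, prof_main_self r hwk hwi,
              bbias_lt hwk, hwi] at h2
            have hre : (r:ℝ) * eps k < 1/2 := reps_lt (by omega) hr
            have hhalf : 1/2 < eta k m := eta_gt_half (by omega)
            linarith
        · rw [prof_main_ne r hwk hwi]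
          linarith
      · by_cases hact : (g At (prof k δ i r)).val - k < i
        · rw [prof_dest_act r hwk hact]
          by_cases hjm : (g At (prof k δ i r)).val - k ≤ m
          · have h1 : (2:ℝ)^((g At (prof k δ i r)).val - k + 1) ≤ 2^(m+1) := hpow2 (by omega)
            have heta := eta_le_one k ((g At (prof k δ i r)).val - k)
            have := mul_le_mul_of_nonneg_right h1 (le_of_lt hMp)
            linarith
          · exfalso
            have hwlt := (g At (prof k δ i r)).isLt
            have hkm2 : k + m < 2*k-1 := by omega
            have hDmem : (⟨k+m, hkm2⟩ : Fin (2*k-1)) ∈ At := by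
              rw [hAtdef]
              unfold threshN
              rw [Finset.mem_filter]
              refine ⟨Finset.mem_univ _, ?_⟩
              rw [bbias_dm m hkm2]
              linarith
            have h2 := hmax _ hDmem
            rw [prof_dm i r m hkm2 (by omega), bbias_dm m hkm2, prof_dest_act r hwk hact,
              bbias_ge hwk] at h2
            have hlt := eta_lt (k := k) (j := m) (j' := (g At (prof k δ i r)).val - k)
              (by omega) (by omega)
            linarith
        · rw [prof_dest_inact r hwk hact]
          linarith
    · rw [if_neg him]
      push_neg at him
      by_cases hwk : (g At (prof k δ i r)).val < k
      · have hge := hcw.1 hwk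
        rw [prof_main_ne r hwk (by omega)]
      · have hge := hcw.2 hwk
        rw [prof_dest_inact r hwk (by omega)]
  have hupper : utilN (SS k δ) (fun _ => 1 / ((2:ℝ)^k-1)) g At
      ≤ (2:ℝ)^(k-m) * ((1 / ((2:ℝ)^k-1)) * (2^(m+1) * Mc δ + 2)) := by
    rw [util_eq]
    have step1 : ∑ s ∈ sig k, (1/((2:ℝ)^k-1)) * prof k δ s.1 s.2 (g At (prof k δ s.1 s.2))
        ≤ ∑ s ∈ sig k, (1/((2:ℝ)^k-1)) * (if m ≤ s.1 then 2^(m+1)*Mc δ + 2 else 0) :=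
      Finset.sum_le_sum (fun s hs => mul_le_mul_of_nonneg_left (hval s hs) (le_of_lt hpc))
    have step2 : ∑ s ∈ sig k, (1/((2:ℝ)^k-1)) * (if m ≤ s.1 then 2^(m+1)*Mc δ + 2 else 0)
        = ((∑ i ∈ Finset.range k, if m ≤ i then 2^(k-1-i) else 0 : ℕ) : ℝ)
            * ((1/((2:ℝ)^k-1)) * (2^(m+1)*Mc δ + 2)) := by
      rw [sig, Finset.sum_sigma, Nat.cast_sum, Finset.sum_mul]
      refine Finset.sum_congr rfl (fun i _ => ?_)
      dsimp only
      show (∑ _s ∈ Finset.range (2^(k-1-i)), (1/((2:ℝ)^k-1)) * (if m ≤ i then 2^(m+1)*Mc δ + 2 else 0)) = _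
      rw [Finset.sum_const, Finset.card_range, nsmul_eq_mul]
      by_cases h : m ≤ i
      · rw [if_pos h, if_pos h]
        try push_cast
        try ring
      · rw [if_neg h, if_neg h]
        push_cast
        try ring
    have step3 : ((∑ i ∈ Finset.range k, if m ≤ i then 2^(k-1-i) else 0 : ℕ) : ℝ)
        ≤ (2:ℝ)^(k-m) := by
      have h := tn_le k m
      calc ((∑ i ∈ Finset.range k, if m ≤ i then 2^(k-1-i) else 0 : ℕ) : ℝ)
          ≤ ((2^(k-m) : ℕ) : ℝ) := by exact_mod_cast h
      _ = (2:ℝ)^(k-m) := by push_cast; ring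
    have hx : (0:ℝ) ≤ (1/((2:ℝ)^k-1)) * (2^(m+1)*Mc δ + 2) :=
      le_of_lt (mul_pos hpc hCpos)
    calc ∑ s ∈ sig k, (1/((2:ℝ)^k-1)) * prof k δ s.1 s.2 (g At (prof k δ s.1 s.2))
        ≤ ∑ s ∈ sig k, (1/((2:ℝ)^k-1)) * (if m ≤ s.1 then 2^(m+1)*Mc δ + 2 else 0) := step1
      _ = ((∑ i ∈ Finset.range k, if m ≤ i then 2^(k-1-i) else 0 : ℕ) : ℝ)
            * ((1/((2:ℝ)^k-1)) * (2^(m+1)*Mc δ + 2)) := step2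
      _ ≤ (2:ℝ)^(k-m) * ((1/((2:ℝ)^k-1)) * (2^(m+1)*Mc δ + 2)) :=
          mul_le_mul_of_nonneg_right step3 hx
  have hδM : (2:ℝ) ≤ δ * Mc δ := by
    have h1 : δ * Mc δ = 4*δ + 2 := by
      unfold Mc
      field_simp
    rw [h1]
    linarith
  have hfinal : ((k:ℝ)/(2+δ)) * ((2:ℝ)^(k-m) * ((1/((2:ℝ)^k-1)) * (2^(m+1) * Mc δ + 2)))
      ≤ (k:ℝ) * ((1 / ((2:ℝ)^k-1)) * ((2:ℝ)^k * Mc δ)) := by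
    have hkm : (2:ℝ)^(k-m) * (2:ℝ)^(m+1) = 2 * 2^k := by
      rw [← pow_add, (by omega : k - m + (m+1) = k + 1)]
      ring
    have h2km : (2:ℝ)^(k-m) ≤ 2^k := hpow2 (by omega)
    have hpk0 : (0:ℝ) < 2^k := by positivity
    have hA : (2:ℝ)^(k-m) * (2^(m+1) * Mc δ + 2) ≤ (2+δ) * ((2:ℝ)^k * Mc δ) := by
      have e1 : (2:ℝ)^(k-m) * (2^(m+1)*Mc δ) = 2 * (2^k * Mc δ) := by
        rw [← mul_assoc, hkm]; ring
      have e3 : 2*(2:ℝ)^k ≤ δ * Mc δ * 2^k :=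
        mul_le_mul_of_nonneg_right hδM (le_of_lt hpk0)
      nlinarith [e1, e3, h2km]
    have hkd : (0:ℝ) ≤ (k:ℝ)/(2+δ) := by positivity
    calc ((k:ℝ)/(2+δ)) * ((2:ℝ)^(k-m) * ((1/((2:ℝ)^k-1)) * (2^(m+1) * Mc δ + 2)))
        = ((k:ℝ)/(2+δ)) * ((1/((2:ℝ)^k-1)) * ((2:ℝ)^(k-m) * (2^(m+1) * Mc δ + 2))) := by
          ring
      _ ≤ ((k:ℝ)/(2+δ)) * ((1/((2:ℝ)^k-1)) * ((2+δ) * ((2:ℝ)^k * Mc δ))) := by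
          exact mul_le_mul_of_nonneg_left (mul_le_mul_of_nonneg_left hA (le_of_lt hpc)) hkd
      _ = (k:ℝ) * ((1/((2:ℝ)^k-1)) * ((2:ℝ)^k * Mc δ)) := by
          have hne2 : (2:ℝ) + δ ≠ 0 := by linarith
          have hc : (k:ℝ)/(2+δ) * (2+δ) = (k:ℝ) := div_mul_cancel₀ _ hne2
          calc ((k:ℝ)/(2+δ)) * ((1/((2:ℝ)^k-1)) * ((2+δ) * ((2:ℝ)^k * Mc δ)))
              = ((k:ℝ)/(2+δ) * (2+δ)) * ((1/((2:ℝ)^k-1)) * ((2:ℝ)^k * Mc δ)) := by ring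
            _ = (k:ℝ) * ((1/((2:ℝ)^k-1)) * ((2:ℝ)^k * Mc δ)) := by rw [hc]
  calc ((k:ℝ)/(2+δ)) * utilN (SS k δ) (fun _ => 1/((2:ℝ)^k-1)) g At
      ≤ ((k:ℝ)/(2+δ)) * ((2:ℝ)^(k-m) * ((1/((2:ℝ)^k-1)) * (2^(m+1) * Mc δ + 2))) := by
        exact mul_le_mul_of_nonneg_left hupper (by positivity)
    _ ≤ (k:ℝ) * ((1/((2:ℝ)^k-1)) * ((2:ℝ)^k * Mc δ)) := hfinal
    _ ≤ utilN (SS k δ) (fun _ => 1/((2:ℝ)^k-1)) g Ast := hAstar_ge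
end

section
/- No delegation set approximates the first-best to a factor better than n: for every n ≥ 1 and every ε ∈ (0,1), consider the instance with n actions whose values are mutually independent, v_i equal to 1−ε with probability 1/n and 0 otherwise, and biases b_i = i, with no outside option. Then every nonempty menu A ⊆ {1,…,n} satisfies f(A) = (1−ε)/n, while the first-best utility satisfies E[max_i v_i] = (1−ε)·(1 − (1 − 1/n)^n); hence E[max_i v_i]/f(A) = n·(1 − (1 − 1/n)^n) ≥ n·(1 − 1/e). -/
open Finset

/-- **first-best gap of `n`.** Consider `n ≥ 1` actions with
mutually independent values, `v i = 1 − ε` with probability `1/n` and `0`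
otherwise, and biases `b i = i` (actions indexed `1, …, n`, i.e. `b i = i + 1`
for `i : Fin n`), with no outside option.  Then every nonempty menu `A` has
`f(A) = (1−ε)/n`, while the first-best `E[max_i v_i]` equals
`(1−ε)·(1 − (1 − 1/n)^n)`; hence the ratio is `n·(1 − (1 − 1/n)^n) ≥ n·(1 − 1/e)`. -/
theorem first_best_gap (n : ℕ) (hn : 0 < n) (ε : ℝ) (hε : 0 < ε) (hε1 : ε < 1)
    (b : Fin n → ℝ) (hb : ∀ i : Fin n, b i = (i : ℝ) + 1)
    (S : Finset (Fin n → ℝ)) (p : (Fin n → ℝ) → ℝ)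
    (hdist : ValidDistN S p) (hindep : IndepValuesN S p)
    (hsupp : ∀ v ∈ S, ∀ i, v i = 1 - ε ∨ v i = 0)
    (hmarg : ∀ i : Fin n, ∑ v ∈ S.filter fun v => v i = 1 - ε, p v = 1 / n)
    (g : Finset (Fin n) → (Fin n → ℝ) → Fin n) (hg : IsChoiceN n b g) :
    (∀ A : Finset (Fin n), A.Nonempty → utilN S p g A = (1 - ε) / n) ∧
    (∑ v ∈ S, p v * Finset.univ.sup' (Finset.univ_nonempty_iff.mpr ⟨⟨0, hn⟩⟩) v
      = (1 - ε) * (1 - (1 - 1 / (n : ℝ)) ^ n)) ∧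
    (∀ A : Finset (Fin n), A.Nonempty →
      (1 - ε) * (1 - (1 - 1 / (n : ℝ)) ^ n)
        = (n : ℝ) * (1 - (1 - 1 / (n : ℝ)) ^ n) * utilN S p g A) ∧
    (n : ℝ) * (1 - 1 / Real.exp 1) ≤ (n : ℝ) * (1 - (1 - 1 / (n : ℝ)) ^ n) := by
  obtain ⟨hp0, hp1, hv0⟩ := hdist
  have hnR : (0:ℝ) < n := by exact_mod_cast hn
  have hne0 : (1:ℝ) - ε ≠ 0 := by linarith
  -- the agent always picks the maximal-index action in A
  have hgmax : ∀ (A : Finset (Fin n)) (hA : A.Nonempty), ∀ v ∈ S, g A v = A.max' hA := by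
    intro A hA v hv
    obtain ⟨hmem, hmax, -⟩ := hg A v hA
    by_contra hne'
    have hlt : g A v < A.max' hA := lt_of_le_of_ne (A.le_max' _ hmem) hne'
    have h1 : ((g A v : ℕ) : ℝ) + 1 ≤ ((A.max' hA : ℕ) : ℝ) := by
      have : (g A v : ℕ) < (A.max' hA : ℕ) := hlt
      exact_mod_cast Nat.succ_le_of_lt this
    have h2 := hmax (A.max' hA) (A.max'_mem hA)
    have h3 : v (g A v) ≤ 1 - ε := by
      rcases hsupp v hv (g A v) with h | h <;> rw [h] <;> linarith
    have h4 := hv0 v hv (A.max' hA)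
    rw [hb, hb] at h2
    linarith
  -- marginal at 0
  have hfilt : ∀ i : Fin n, S.filter (fun v => ¬ v i = 1 - ε) = S.filter (fun v => v i = 0) := by
    intro i
    apply Finset.filter_congr
    intro v hv
    rcases hsupp v hv i with h | h
    · rw [h]
      exact iff_of_false (fun h2 => h2 rfl) hne0
    · rw [h]
      exact iff_of_true (fun h2 => hne0 h2.symm) rfl
  have hmarg0 : ∀ i : Fin n, ∑ v ∈ S.filter (fun v => v i = 0), p v = 1 - 1/n := by
    intro i
    have hsplit := Finset.sum_filter_add_sum_filter_not S (fun v => v i = 1 - ε) p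
    rw [hfilt i, hmarg i, hp1] at hsplit
    linarith
  -- Part 1
  have hutil : ∀ A : Finset (Fin n), A.Nonempty → utilN S p g A = (1 - ε) / n := by
    intro A hA
    unfold utilN
    have hcongr : ∑ v ∈ S, p v * v (g A v) = ∑ v ∈ S, p v * v (A.max' hA) :=
      Finset.sum_congr rfl fun v hv => by rw [hgmax A hA v hv]
    rw [hcongr, ← Finset.sum_filter_add_sum_filter_not S (fun v => v (A.max' hA) = 1 - ε)]
    have e1 : ∑ v ∈ S.filter (fun v => v (A.max' hA) = 1 - ε), p v * v (A.max' hA)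
        = (1 - ε) * ∑ v ∈ S.filter (fun v => v (A.max' hA) = 1 - ε), p v := by
      rw [Finset.mul_sum]
      refine Finset.sum_congr rfl fun v hv => ?_
      rw [(Finset.mem_filter.mp hv).2]; ring
    have e2 : ∑ v ∈ S.filter (fun v => ¬ v (A.max' hA) = 1 - ε), p v * v (A.max' hA) = 0 := by
      refine Finset.sum_eq_zero fun v hv => ?_
      obtain ⟨hvS, hv2⟩ := Finset.mem_filter.mp hv
      rcases hsupp v hvS (A.max' hA) with h | h
      · exact absurd h hv2
      · rw [h, mul_zero]
    rw [e1, e2, hmarg (A.max' hA), add_zero]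
    ring
  refine ⟨hutil, ?_, ?_, ?_⟩
  · -- first-best
    set hU := Finset.univ_nonempty_iff.mpr (⟨⟨0, hn⟩⟩ : Nonempty (Fin n))
    set z : Fin n → ℝ := fun _ => 0 with hz
    have hP0 : ∑ v ∈ S.filter (fun v => v = z), p v = (1 - 1/(n:ℝ)) ^ n := by
      rw [hindep z]
      rw [Finset.prod_congr rfl fun i _ => hmarg0 i]
      simp [Finset.prod_const]
    have hsup0 : ∀ v ∈ S.filter (fun v => v = z), Finset.univ.sup' hU v = 0 := by
      intro v hv
      rw [(Finset.mem_filter.mp hv).2, hz]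
      exact Finset.sup'_const _ _
    have hsup1 : ∀ v ∈ S.filter (fun v => ¬ v = z), Finset.univ.sup' hU v = 1 - ε := by
      intro v hv
      obtain ⟨hvS, hv2⟩ := Finset.mem_filter.mp hv
      have hex : ∃ i, v i = 1 - ε := by
        by_contra hc
        push_neg at hc
        apply hv2
        funext i
        rcases hsupp v hvS i with h | h
        · exact absurd h (hc i)
        · exact h
      obtain ⟨i, hi⟩ := hex
      apply le_antisymm
      · apply Finset.sup'_le
        intro j _
        rcases hsupp v hvS j with h | h <;> rw [h] <;> linarith
      · rw [← hi]
        exact Finset.le_sup' v (Finset.mem_univ i)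
    have hrest : ∑ v ∈ S.filter (fun v => ¬ v = z), p v = 1 - (1 - 1/(n:ℝ)) ^ n := by
      have hsplit := Finset.sum_filter_add_sum_filter_not S (fun v => v = z) p
      rw [hP0, hp1] at hsplit
      linarith
    have eA : ∑ v ∈ S.filter (fun v => v = z), p v * Finset.univ.sup' hU v = 0 :=
      Finset.sum_eq_zero fun v hv => by rw [hsup0 v hv, mul_zero]
    have eB : ∑ v ∈ S.filter (fun v => ¬ v = z), p v * Finset.univ.sup' hU v
        = (1 - ε) * (1 - (1 - 1/(n:ℝ)) ^ n) := by
      have hc : ∀ v ∈ S.filter (fun v => ¬ v = z),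
          p v * Finset.univ.sup' hU v = p v * (1 - ε) :=
        fun v hv => by rw [hsup1 v hv]
      rw [Finset.sum_congr rfl hc, ← Finset.sum_mul, hrest]
      ring
    calc ∑ v ∈ S, p v * Finset.univ.sup' hU v
        = (∑ v ∈ S.filter (fun v => v = z), p v * Finset.univ.sup' hU v)
          + ∑ v ∈ S.filter (fun v => ¬ v = z), p v * Finset.univ.sup' hU v :=
          (Finset.sum_filter_add_sum_filter_not S (fun v => v = z) _).symm
      _ = (1 - ε) * (1 - (1 - 1/(n:ℝ)) ^ n) := by rw [eA, eB, zero_add]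
  · -- ratio identity
    intro A hA
    rw [hutil A hA]
    field_simp
  · -- exp bound
    have h1 : (1:ℝ) - 1/n ≤ Real.exp (-(1/n)) := by
      have := Real.add_one_le_exp (-(1/(n:ℝ)))
      linarith
    have h2 : (0:ℝ) ≤ 1 - 1/n := by
      have h3 : (1:ℝ) ≤ n := by exact_mod_cast hn
      have : 1/(n:ℝ) ≤ 1 := by
        rw [div_le_one hnR]; exact h3
      linarith
    have h3 : (1 - 1/(n:ℝ)) ^ n ≤ Real.exp (-(1/(n:ℝ))) ^ n := pow_le_pow_left₀ h2 h1 n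
    have h4 : Real.exp (-(1/(n:ℝ))) ^ n = Real.exp (-1) := by
      rw [← Real.exp_nat_mul]
      congr 1
      field_simp
    have h5 : Real.exp (-1) = 1 / Real.exp 1 := by
      rw [Real.exp_neg]; exact (one_div _).symm
    rw [h4, h5] at h3
    apply mul_le_mul_of_nonneg_left _ (le_of_lt hnR)
    linarith
end

section
/- Let m ≥ 2 and let p_1, …, p_m ∈ (0,1) satisfy Σ_{j=1}^m p_j ≤ 1. Then Π_{j=1}^m (1 − p_j)/p_j ≥ (m−1)^m, with the minimum attained at p_1 = ⋯ = p_m = 1/m. -/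
open Finset

/-- **odds-ratio product inequality.** For `m ≥ 2` and
`p₁, …, p_m ∈ (0,1)` with `∑ p_j ≤ 1`, the product of odds ratios satisfies
`∏ (1 − p_j)/p_j ≥ (m − 1)^m`, with the minimum attained at `p_j = 1/m` for all
`j`. -/
theorem odds_ratio_product_inequality (m : ℕ) (hm : 2 ≤ m) (p : Fin m → ℝ)
    (hp : ∀ j, p j ∈ Set.Ioo (0 : ℝ) 1) (hsum : ∑ j, p j ≤ 1) :
    ((m : ℝ) - 1) ^ m ≤ ∏ j, (1 - p j) / p j ∧
      ((∀ j, p j = 1 / m) → ∏ j, (1 - p j) / p j = ((m : ℝ) - 1) ^ m) := by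
  have hm1 : (1:ℝ) ≤ (m:ℝ) - 1 := by
    have : (2:ℝ) ≤ (m:ℝ) := by exact_mod_cast hm
    linarith
  have hmpos : (0:ℝ) < (m:ℝ) := by linarith
  have hpp : ∀ j, 0 < p j := fun j => (hp j).1
  constructor
  · -- main inequality
    set c : ℝ := ((m:ℝ) - 1)⁻¹ with hc
    have hcpos : 0 < c := inv_pos.mpr (by linarith)
    -- Step 1: 1 - p j ≥ (m-1) * ∏_{i ≠ j} (p i)^c  by AM-GM
    have key : ∀ j, ((m:ℝ) - 1) * ∏ i ∈ univ.erase j, (p i) ^ c ≤ 1 - p j := by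
      intro j
      have hsum' : ∑ i ∈ univ.erase j, p i ≤ 1 - p j := by
        have := Finset.add_sum_erase univ p (mem_univ j)
        have h2 : p j + ∑ i ∈ univ.erase j, p i ≤ 1 := by rw [this]; exact hsum
        linarith
      have card : (univ.erase j).card = m - 1 := by
        rw [Finset.card_erase_of_mem (mem_univ j), Finset.card_univ, Fintype.card_fin]
      have hwsum : ∑ _i ∈ univ.erase j, c = 1 := by
        rw [Finset.sum_const, card, nsmul_eq_mul]
        have : ((m - 1 : ℕ) : ℝ) = (m:ℝ) - 1 := by
          have : 1 ≤ m := by omega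
          push_cast [Nat.cast_sub this]; ring
        rw [this, hc, mul_inv_cancel₀ (by linarith)]
      have amgm := Real.geom_mean_le_arith_mean_weighted (univ.erase j)
        (fun _ => c) p (fun i _ => le_of_lt hcpos) hwsum (fun i _ => (hpp i).le)
      have : ∏ i ∈ univ.erase j, (p i) ^ c ≤ c * ∑ i ∈ univ.erase j, p i := by
        rw [Finset.mul_sum]; exact amgm
      calc ((m:ℝ) - 1) * ∏ i ∈ univ.erase j, (p i) ^ c
          ≤ ((m:ℝ) - 1) * (c * ∑ i ∈ univ.erase j, p i) := by
            apply mul_le_mul_of_nonneg_left this (by linarith)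
        _ = ∑ i ∈ univ.erase j, p i := by
            rw [hc]; field_simp
        _ ≤ 1 - p j := hsum'
    -- Step 2: product over j
    have prodkey : ∏ j, (((m:ℝ) - 1) * ∏ i ∈ univ.erase j, (p i) ^ c)
        ≤ ∏ j, (1 - p j) := by
      apply Finset.prod_le_prod
      · intro j _
        exact mul_nonneg (by linarith) (Finset.prod_nonneg fun i _ =>
          Real.rpow_nonneg (hpp i).le _)
      · intro j _; exact key j
    have hppow : ∀ i, (0:ℝ) < (p i) ^ c := fun i => Real.rpow_pos_of_pos (hpp i) _
    have inner_eq : ∀ j, ∏ i ∈ univ.erase j, (p i) ^ c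
        = (∏ i, (p i) ^ c) / (p j) ^ c := by
      intro j
      rw [eq_div_iff (ne_of_gt (hppow j)), mul_comm]
      exact Finset.mul_prod_erase univ (fun i => (p i) ^ c) (mem_univ j)
    have lhs_eq : ∏ j, (((m:ℝ) - 1) * ∏ i ∈ univ.erase j, (p i) ^ c)
        = ((m:ℝ) - 1) ^ m * ∏ j, p j := by
      rw [Finset.prod_mul_distrib, Finset.prod_const, Finset.card_univ, Fintype.card_fin]
      congr 1
      have : ∏ j, ∏ i ∈ univ.erase j, (p i) ^ c
          = (∏ i, (p i) ^ c) ^ m / ∏ j, (p j) ^ c := by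
        rw [Finset.prod_congr rfl (fun j _ => inner_eq j), Finset.prod_div_distrib,
          Finset.prod_const, Finset.card_univ, Fintype.card_fin]
      rw [this]
      have hprodpos : (0:ℝ) < ∏ j, (p j) ^ c := Finset.prod_pos fun i _ => hppow i
      rw [div_eq_iff (ne_of_gt hprodpos)]
      rw [← Finset.prod_pow, ← Finset.prod_mul_distrib]
      apply Finset.prod_congr rfl
      intro i _
      rw [← Real.rpow_natCast ((p i) ^ c) m, ← Real.rpow_mul (hpp i).le]
      have hcm : c * (m:ℝ) = 1 + c := by
        rw [hc]
        have hne : (m:ℝ) - 1 ≠ 0 := by linarith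
        field_simp
        ring
      rw [hcm, Real.rpow_add (hpp i), Real.rpow_one]
    have prodp_pos : (0:ℝ) < ∏ j, p j := Finset.prod_pos fun i _ => hpp i
    have final : ((m:ℝ) - 1) ^ m * ∏ j, p j ≤ ∏ j, (1 - p j) := by
      rw [← lhs_eq]; exact prodkey
    rw [Finset.prod_div_distrib, le_div_iff₀ prodp_pos]
    exact final
  · intro h
    have : ∀ j, (1 - p j) / p j = (m:ℝ) - 1 := by
      intro j
      rw [h j]
      field_simp
    rw [Finset.prod_congr rfl (fun j _ => this j), Finset.prod_const,
      Finset.card_univ, Fintype.card_fin]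
end
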